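/- Let A : ℝ → Matrix (Fin 2) (Fin 2) ℝ, let λ̃ : ℝ → ℝ and θ : ℝ → ℝ be differentiable, and define λ : ℝ → ℝ² by λ(t) = −λ̃(t)·(cos θ(t), sin θ(t)). If λ satisfies λ'(t) = −A(t)ᵀ λ(t) for all t, then the amplitude satisfies λ̃'(t) = −λ̃(t)·⟨(cos θ(t), sin θ(t)), A(t)ᵀ (cos θ(t), sin θ(t))⟩ for all t. -/

import Mathlib

open Matrix

/-- If the costate `λ(t) = −λ̃(t)·(cos θ(t), sin θ(t))` (with `λ̃` and `θ`
differentiable) satisfies the costate equation `λ' = −A(t)ᵀ λ`, then the amplitude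
satisfies `λ̃' = −λ̃·⟨(cos θ, sin θ), A(t)ᵀ (cos θ, sin θ)⟩`. -/
theorem stmt7 (A : ℝ → Matrix (Fin 2) (Fin 2) ℝ) (lam θ : ℝ → ℝ)
    (hlam : Differentiable ℝ lam) (hθ : Differentiable ℝ θ)
    (l : ℝ → (Fin 2 → ℝ))
    (hl : ∀ t, l t = -(lam t) • ![Real.cos (θ t), Real.sin (θ t)])
    (hode : ∀ t, deriv l t = -(Matrix.mulVec (A t)ᵀ (l t))) :
    ∀ t, deriv lam t =
      -(lam t) * dotProduct ![Real.cos (θ t), Real.sin (θ t)]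
        (Matrix.mulVec (A t)ᵀ ![Real.cos (θ t), Real.sin (θ t)]) := by
  intro t
  set c := Real.cos (θ t) with hc
  set s := Real.sin (θ t) with hs
  have hθt : HasDerivAt θ (deriv θ t) t := (hθ t).hasDerivAt
  have hlt : HasDerivAt lam (deriv lam t) t := (hlam t).hasDerivAt
  have hcos : HasDerivAt (fun u => Real.cos (θ u)) (-s * deriv θ t) t := by
    simpa [hs, Function.comp_def] using (Real.hasDerivAt_cos (θ t)).comp t hθt
  have hsin : HasDerivAt (fun u => Real.sin (θ u)) (c * deriv θ t) t := by
    simpa [hc, Function.comp_def] using (Real.hasDerivAt_sin (θ t)).comp t hθt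
  have h0 : HasDerivAt (fun u => l u 0)
      (-(deriv lam t) * c + -(lam t) * (-s * deriv θ t)) t := by
    have : HasDerivAt (fun u => -(lam u) * Real.cos (θ u))
        (-(deriv lam t) * c + -(lam t) * (-s * deriv θ t)) t :=
      (hlt.neg.mul hcos)
    refine this.congr_of_eventuallyEq ?_
    filter_upwards with u
    simp [hl u]
  have h1 : HasDerivAt (fun u => l u 1)
      (-(deriv lam t) * s + -(lam t) * (c * deriv θ t)) t := by
    have : HasDerivAt (fun u => -(lam u) * Real.sin (θ u))
        (-(deriv lam t) * s + -(lam t) * (c * deriv θ t)) t :=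
      (hlt.neg.mul hsin)
    refine this.congr_of_eventuallyEq ?_
    filter_upwards with u
    simp [hl u]
  have hld : HasDerivAt l
      ![(-(deriv lam t) * c + -(lam t) * (-s * deriv θ t)),
        (-(deriv lam t) * s + -(lam t) * (c * deriv θ t))] t := by
    rw [hasDerivAt_pi]
    intro i
    fin_cases i
    · simpa using h0
    · simpa using h1
  have hderiv := hld.deriv
  have hode' := hode t
  rw [hderiv] at hode'
  -- right-hand side of ODE: -Aᵀ (l t) = lam t • Aᵀ u
  have hrhs : -(Matrix.mulVec (A t)ᵀ (l t))
      = lam t • Matrix.mulVec (A t)ᵀ ![c, s] := by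
    rw [hl t]
    rw [Matrix.mulVec_smul]
    funext i
    fin_cases i <;> simp [Matrix.mulVec, hc, hs]
  rw [hrhs] at hode'
  have e0 := congrFun hode' 0
  have e1 := congrFun hode' 1
  simp [Matrix.cons_val_zero, Matrix.cons_val_one] at e0 e1
  have hcs : c ^ 2 + s ^ 2 = 1 := by
    rw [hc, hs]; exact Real.cos_sq_add_sin_sq (θ t)
  have hdot : dotProduct ![c, s] (Matrix.mulVec (A t)ᵀ ![c, s])
      = c * (Matrix.mulVec (A t)ᵀ ![c, s]) 0 + s * (Matrix.mulVec (A t)ᵀ ![c, s]) 1 := by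
    simp [dotProduct, Fin.sum_univ_two]
  rw [hdot]
  simp [Matrix.mulVec, dotProduct, Fin.sum_univ_two]
  linear_combination (-c) * e0 + (-s) * e1 + (-(deriv lam t)) * hcs
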